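/- The set of weakly Pareto efficient points of the BCC production possibility set T coincides with the topological boundary of T in ℝ^m × ℝ^r: WEff_p T = Bound T. -/

import Mathlib

open Finset

open Pointwise

/-- The BCC production possibility set generated by units with inputs `X j` and outputs `Y j`. -/
def BCC {ι : Type*} [Fintype ι] {m r : ℕ} (X : ι → Fin m → ℝ) (Y : ι → Fin r → ℝ) :
    Set ((Fin m → ℝ) × (Fin r → ℝ)) :=
  {p | ∃ l : ι → ℝ, (∀ j, 0 ≤ l j) ∧ (∑ j, l j = 1) ∧
    (∀ k, ∑ j, l j * X j k ≤ p.1 k) ∧ (∀ i, p.2 i ≤ ∑ j, l j * Y j i)}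

/-- Weakly Pareto efficient points of `T`. -/
def WEffP {m r : ℕ} (T : Set ((Fin m → ℝ) × (Fin r → ℝ))) : Set ((Fin m → ℝ) × (Fin r → ℝ)) :=
  {p | p ∈ T ∧ ¬∃ q ∈ T, (∀ k, q.1 k < p.1 k) ∧ (∀ i, p.2 i < q.2 i)}

/-- The BCC set is closed: it is the sum of a compact set (the image of the standard simplex)
and a closed "free disposal" cone. -/
lemma bcc_closed {m r n : ℕ} (X : Fin n → Fin m → ℝ) (Y : Fin n → Fin r → ℝ) :
    IsClosed (BCC X Y) := by
  have hK : IsCompact ((fun l : Fin n → ℝ =>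
      ((fun k => ∑ j, l j * X j k, fun i => ∑ j, l j * Y j i) :
        (Fin m → ℝ) × (Fin r → ℝ))) '' stdSimplex ℝ (Fin n)) := by
    apply (isCompact_stdSimplex ℝ (Fin n)).image
    apply Continuous.prodMk <;> exact continuous_pi (fun k => by fun_prop)
  have hC : IsClosed ({a : Fin m → ℝ | ∀ k, 0 ≤ a k} ×ˢ {b : Fin r → ℝ | ∀ i, b i ≤ 0}) := by
    apply IsClosed.prod
    · have : {a : Fin m → ℝ | ∀ k, 0 ≤ a k} = ⋂ k, {a | 0 ≤ a k} := by
        ext a; simp [Set.mem_iInter]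
      rw [this]
      exact isClosed_iInter fun k => isClosed_le continuous_const (continuous_apply k)
    · have : {b : Fin r → ℝ | ∀ i, b i ≤ 0} = ⋂ i, {b | b i ≤ 0} := by
        ext b; simp [Set.mem_iInter]
      rw [this]
      exact isClosed_iInter fun i => isClosed_le (continuous_apply i) continuous_const
  have heq : BCC X Y = ((fun l : Fin n → ℝ =>
      ((fun k => ∑ j, l j * X j k, fun i => ∑ j, l j * Y j i) :
        (Fin m → ℝ) × (Fin r → ℝ))) '' stdSimplex ℝ (Fin n))
      + ({a : Fin m → ℝ | ∀ k, 0 ≤ a k} ×ˢ {b : Fin r → ℝ | ∀ i, b i ≤ 0}) := by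
    ext p
    constructor
    · rintro ⟨l, hl0, hl1, hlX, hlY⟩
      rw [Set.mem_add]
      refine ⟨_, ⟨l, ⟨hl0, hl1⟩, rfl⟩,
        (fun k => p.1 k - ∑ j, l j * X j k, fun i => p.2 i - ∑ j, l j * Y j i), ⟨?_, ?_⟩, ?_⟩
      · intro k; simpa using hlX k
      · intro i; simpa using hlY i
      · ext x <;> simp
    · rw [Set.mem_add]
      rintro ⟨x, ⟨l, ⟨hl0, hl1⟩, rfl⟩, y, ⟨hy1, hy2⟩, rfl⟩
      refine ⟨l, hl0, hl1, fun k => ?_, fun i => ?_⟩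
      · have := hy1 k; simp only [Prod.fst_add, Pi.add_apply]; linarith
      · have := hy2 i; simp only [Prod.snd_add, Pi.add_apply]; linarith
  rw [heq]
  exact hC.add_left_of_isCompact hK

/-- The set of weakly Pareto efficient points of the BCC production possibility set coincides
with its topological boundary: `WEff_p T = Bound T`. -/
theorem weffP_eq_frontier (m r n : ℕ) (hn : 1 ≤ n)
    (X : Fin n → Fin m → ℝ) (Y : Fin n → Fin r → ℝ)
    (hX : ∀ j k, 0 ≤ X j k) (hY : ∀ j i, 0 ≤ Y j i) :
    WEffP (BCC X Y) = frontier (BCC X Y) := by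
  have hclosed := bcc_closed X Y
  rw [hclosed.frontier_eq]
  ext p
  simp only [WEffP, Set.mem_setOf_eq, Set.mem_diff]
  constructor
  · rintro ⟨hp, hne⟩
    refine ⟨hp, fun hint => hne ?_⟩
    obtain ⟨ε, hε, hball⟩ := Metric.isOpen_iff.1 isOpen_interior p hint
    refine ⟨(fun k => p.1 k - ε / 2, fun i => p.2 i + ε / 2), ?_,
      fun k => by simp [hε], fun i => by simp [hε]⟩
    apply interior_subset
    apply hball
    rw [Metric.mem_ball, Prod.dist_eq]
    have h1 : dist (fun k => p.1 k - ε / 2) p.1 ≤ ε / 2 := by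
      apply dist_pi_le_iff (by positivity) |>.2
      intro k
      simp [Real.dist_eq, abs_of_nonneg hε.le]
    have h2 : dist (fun i => p.2 i + ε / 2) p.2 ≤ ε / 2 := by
      apply dist_pi_le_iff (by positivity) |>.2
      intro i
      simp [Real.dist_eq, abs_of_nonneg hε.le]
    have : max (dist (fun k => p.1 k - ε / 2) p.1) (dist (fun i => p.2 i + ε / 2) p.2) ≤ ε / 2 :=
      max_le h1 h2
    linarith
  · rintro ⟨hp, hni⟩
    refine ⟨hp, ?_⟩
    rintro ⟨q, ⟨l, hl0, hl1, hlX, hlY⟩, hq1, hq2⟩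
    apply hni
    apply mem_interior.2
    refine ⟨{a | ∀ k, q.1 k < a.1 k} ∩ {a | ∀ i, a.2 i < q.2 i}, ?_, ?_,
      fun k => hq1 k, fun i => hq2 i⟩
    · rintro a ⟨ha1, ha2⟩
      exact ⟨l, hl0, hl1, fun k => (hlX k).trans (ha1 k).le, fun i => (ha2 i).le.trans (hlY i)⟩
    · apply IsOpen.inter
      · have : {a : (Fin m → ℝ) × (Fin r → ℝ) | ∀ k, q.1 k < a.1 k}
            = ⋂ k, {a | q.1 k < a.1 k} := by
          ext a; simp [Set.mem_iInter]
        rw [this]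
        exact isOpen_iInter_of_finite fun k =>
          isOpen_lt continuous_const ((continuous_apply k).comp continuous_fst)
      · have : {a : (Fin m → ℝ) × (Fin r → ℝ) | ∀ i, a.2 i < q.2 i}
            = ⋂ i, {a | a.2 i < q.2 i} := by
          ext a; simp [Set.mem_iInter]
        rw [this]
        exact isOpen_iInter_of_finite fun i =>
          isOpen_lt ((continuous_apply i).comp continuous_snd) continuous_const
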